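/- In the Bowen lifting setup, let ν̃ be the lifted measure. Then for every continuous function φ : X → ℝ and every k ∈ ℕ, |∫ φ dν̃ − ∫ (φ ∘ F^k)* dν̄| ≤ var φ(k). -/

import Mathlib

open MeasureTheory Filter

noncomputable section

/-- The discretization of `φ : X → ℝ` along the fibers of `π : X → Y`:
`φ*(y) = inf {φ(x) : π(x) = y}`. -/
def disc {X Y : Type*} (π : X → Y) (φ : X → ℝ) : Y → ℝ :=
  fun y => sInf (φ '' (π ⁻¹' {y}))

/-- The variation of `φ : X → ℝ` at scale `r`:
`sup {|φ(x) - φ(x')| : dist x x' ≤ r}`. -/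
def varAt {X : Type*} [MetricSpace X] (φ : X → ℝ) (r : ℝ) : ℝ :=
  sSup {t : ℝ | ∃ x x' : X, dist x x' ≤ r ∧ t = |φ x - φ x'|}

/-- Bowen lifting setup: if `ν̃` is the lifted measure, then for every continuous
`φ : X → ℝ` and every `k`, `|∫ φ dν̃ - ∫ (φ ∘ F^k)* dν̄| ≤ var φ(k)`. -/
theorem bowen_lift_integral_estimate
    {X Y : Type*} [MetricSpace X] [CompactSpace X]
    [MeasurableSpace X] [BorelSpace X] [MeasurableSpace Y]
    (π : X → Y) (F : X → X) (Fbar : Y → Y) (ν : Measure Y) (C β : ℝ)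
    (hπ : Function.Surjective π) (hF : Continuous F) (hFbar : Measurable Fbar)
    (hcomm : π ∘ F = Fbar ∘ π)
    (hprob : IsProbabilityMeasure ν)
    (hinv : Measure.map Fbar ν = ν)
    (hC : 0 < C) (hβ0 : 0 < β) (hβ1 : β < 1)
    (hdiam : ∀ (y : Y) (k : ℕ), Metric.diam (F^[k] '' (π ⁻¹' {y})) ≤ C * β ^ k)
    (hmeas : ∀ φ : X → ℝ, Continuous φ → ∀ k : ℕ, Measurable (disc π (φ ∘ F^[k])))
    (νt : Measure X) (hνt : IsProbabilityMeasure νt)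
    (hlift : ∀ φ : X → ℝ, Continuous φ →
      Tendsto (fun k : ℕ => ∫ y, disc π (φ ∘ F^[k]) y ∂ν) atTop
        (nhds (∫ x, φ x ∂νt)))
    (φ : X → ℝ) (hφ : Continuous φ) (k : ℕ) :
    |(∫ x, φ x ∂νt) - ∫ y, disc π (φ ∘ F^[k]) y ∂ν| ≤ varAt φ (C * β ^ k) := by
  classical
  have hXne : Nonempty X := by
    by_contra h
    rw [not_nonempty_iff] at h
    have : νt Set.univ = 1 := hνt.measure_univ
    simp [Set.univ_eq_empty_iff.mpr h] at this
  -- a bound M for |φ|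
  obtain ⟨xM, hxM⟩ := isCompact_univ.exists_isMaxOn Set.univ_nonempty
    (hφ.abs.continuousOn (s := Set.univ))
  set M : ℝ := |φ xM| with hM
  have hMb : ∀ x : X, |φ x| ≤ M := fun x => hxM.2 (Set.mem_univ x)
  set V : ℝ := varAt φ (C * β ^ k) with hV
  -- variation bound
  have hvar : ∀ x x' : X, dist x x' ≤ C * β ^ k → |φ x - φ x'| ≤ V := by
    intro x x' hd
    apply le_csSup
    · refine ⟨2 * M, ?_⟩
      rintro t ⟨a, b, -, rfl⟩
      calc |φ a - φ b| ≤ |φ a| + |φ b| := abs_sub _ _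
        _ ≤ M + M := add_le_add (hMb a) (hMb b)
        _ = 2 * M := by ring
    · exact ⟨x, x', hd, rfl⟩
  -- boundedness of X subsets
  have hbdd : ∀ s : Set X, Bornology.IsBounded s := fun s =>
    isCompact_univ.isBounded.subset s.subset_univ
  -- semiconjugacy iterated
  have hsc : Function.Semiconj π F Fbar := fun x => congrFun hcomm x
  -- bound on disc
  have hdiscb : ∀ (j : ℕ) (y : Y), |disc π (φ ∘ F^[j]) y| ≤ M := by
    intro j y
    obtain ⟨x, hx⟩ := hπ y
    have hne : ((φ ∘ F^[j]) '' (π ⁻¹' {y})).Nonempty := ⟨_, ⟨x, by simp [hx], rfl⟩⟩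
    have hbdd' : BddBelow ((φ ∘ F^[j]) '' (π ⁻¹' {y})) := by
      refine ⟨-M, ?_⟩
      rintro t ⟨a, -, rfl⟩
      exact neg_le_of_abs_le (hMb _)
    rw [abs_le]
    constructor
    · exact le_csInf hne (by rintro t ⟨a, -, rfl⟩; exact neg_le_of_abs_le (hMb _))
    · calc sInf _ ≤ (φ ∘ F^[j]) x := csInf_le hbdd' ⟨x, by simp [hx], rfl⟩
        _ ≤ M := le_of_abs_le (hMb _)
  -- key pointwise estimate
  have hpt : ∀ (m : ℕ) (y : Y),
      |disc π (φ ∘ F^[k + m]) y - disc π (φ ∘ F^[k]) (Fbar^[m] y)| ≤ V := by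
    intro m y
    obtain ⟨x, hx⟩ := hπ y
    set S : Set X := F^[k] '' (π ⁻¹' {Fbar^[m] y}) with hS
    have hSd : Metric.diam S ≤ C * β ^ k := hdiam _ k
    -- A ⊆ φ '' S
    have hsub : (φ ∘ F^[k + m]) '' (π ⁻¹' {y}) ⊆ φ '' S := by
      rintro t ⟨a, ha, rfl⟩
      refine ⟨F^[k] (F^[m] a), ⟨F^[m] a, ?_, rfl⟩, ?_⟩
      · simp only [Set.mem_preimage, Set.mem_singleton_iff]
        rw [(hsc.iterate_right m).eq a, Set.mem_singleton_iff.mp ha]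
      · simp [Function.comp, Function.iterate_add_apply]
    have hAne : ((φ ∘ F^[k + m]) '' (π ⁻¹' {y})).Nonempty := ⟨_, ⟨x, by simp [hx], rfl⟩⟩
    obtain ⟨x', hx'⟩ := hπ (Fbar^[m] y)
    have hBne : (φ '' S).Nonempty := ⟨_, ⟨F^[k] x', ⟨x', by simp [hx'], rfl⟩, rfl⟩⟩
    have hBbdd : BddBelow (φ '' S) := by
      refine ⟨-M, ?_⟩
      rintro t ⟨a, -, rfl⟩
      exact neg_le_of_abs_le (hMb _)
    have hABbdd : BddBelow ((φ ∘ F^[k + m]) '' (π ⁻¹' {y})) := hBbdd.mono hsub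
    have h1 : sInf (φ '' S) ≤ sInf ((φ ∘ F^[k + m]) '' (π ⁻¹' {y})) :=
      csInf_le_csInf hBbdd hAne hsub
    have h2 : sInf ((φ ∘ F^[k + m]) '' (π ⁻¹' {y})) ≤ sInf (φ '' S) + V := by
      obtain ⟨a, haA⟩ := hAne
      obtain ⟨p, hpS, hpa⟩ := hsub haA
      have : a - V ≤ sInf (φ '' S) := by
        apply le_csInf hBne
        rintro t ⟨q, hqS, rfl⟩
        have hd : dist p q ≤ C * β ^ k :=
          le_trans (Metric.dist_le_diam_of_mem (hbdd S) hpS hqS) hSd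
        have := hvar p q hd
        rw [← hpa]
        have := le_of_abs_le this
        linarith
      have ha : sInf ((φ ∘ F^[k + m]) '' (π ⁻¹' {y})) ≤ a := csInf_le hABbdd haA
      linarith
    have hdisc1 : disc π (φ ∘ F^[k + m]) y = sInf ((φ ∘ F^[k + m]) '' (π ⁻¹' {y})) := rfl
    have hdisc2 : disc π (φ ∘ F^[k]) (Fbar^[m] y) = sInf (φ '' S) := by
      rw [disc, hS, Set.image_image]
      rfl
    rw [hdisc1, hdisc2, abs_sub_le_iff]
    constructor <;> linarith
  -- invariance of ν under iterates
  have hinvm : ∀ m : ℕ, Measure.map Fbar^[m] ν = ν := by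
    intro m
    induction m with
    | zero => simp
    | succ n ih =>
      rw [Function.iterate_succ']
      rw [← Measure.map_map hFbar (hFbar.iterate n), ih, hinv]
  -- integral of disc ∘ Fbar^[m]
  have hint : ∀ m : ℕ,
      ∫ y, disc π (φ ∘ F^[k]) (Fbar^[m] y) ∂ν = ∫ y, disc π (φ ∘ F^[k]) y ∂ν := by
    intro m
    rw [← integral_map (hFbar.iterate m).aemeasurable
      (by rw [hinvm m]; exact (hmeas φ hφ k).aestronglyMeasurable), hinvm m]
  -- integrability
  have hintegrable : ∀ j : ℕ, Integrable (disc π (φ ∘ F^[j])) ν := fun j =>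
    ⟨(hmeas φ hφ j).aestronglyMeasurable,
      HasFiniteIntegral.of_bounded (C := M) (ae_of_all _ fun y => by
        simpa [Real.norm_eq_abs] using hdiscb j y)⟩
  have hintegrable' : ∀ m : ℕ, Integrable (fun y => disc π (φ ∘ F^[k]) (Fbar^[m] y)) ν := by
    intro m
    refine ⟨((hmeas φ hφ k).comp (hFbar.iterate m)).aestronglyMeasurable, ?_⟩
    exact HasFiniteIntegral.of_bounded (C := M) (ae_of_all _ fun y => by
      simpa [Real.norm_eq_abs] using hdiscb k (Fbar^[m] y))
  -- integral estimate for each m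
  have hIm : ∀ m : ℕ,
      |(∫ y, disc π (φ ∘ F^[k + m]) y ∂ν) - ∫ y, disc π (φ ∘ F^[k]) y ∂ν| ≤ V := by
    intro m
    rw [← hint m, ← integral_sub (hintegrable (k + m)) (hintegrable' m)]
    have := norm_integral_le_of_norm_le_const (μ := ν)
      (f := fun y => disc π (φ ∘ F^[k + m]) y - disc π (φ ∘ F^[k]) (Fbar^[m] y)) (C := V)
      (ae_of_all _ fun y => by simpa [Real.norm_eq_abs] using hpt m y)
    simpa [Real.norm_eq_abs, hprob.measure_univ] using this
  -- pass to the limit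
  have hlim : Tendsto (fun m : ℕ => ∫ y, disc π (φ ∘ F^[k + m]) y ∂ν) atTop
      (nhds (∫ x, φ x ∂νt)) := by
    have := (hlift φ hφ).comp (tendsto_add_atTop_nat k)
    simpa [Function.comp_def, add_comm k] using this
  have habs : Tendsto
      (fun m : ℕ => |(∫ y, disc π (φ ∘ F^[k + m]) y ∂ν) - ∫ y, disc π (φ ∘ F^[k]) y ∂ν|)
      atTop (nhds |(∫ x, φ x ∂νt) - ∫ y, disc π (φ ∘ F^[k]) y ∂ν|) :=
    ((hlim.sub tendsto_const_nhds).abs)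
  exact le_of_tendsto habs (Eventually.of_forall hIm)
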